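/- arXiv:1201.3814 — 2 statements merged into one kernel-verified Lean document; each statement's English description precedes it below -/
import Mathlib

section
/- Let G be a profinite group and S an infinite suitable subset of G. Then |S| = w(G); in particular any two infinite suitable subsets of a profinite group have the same cardinality. -/
universe u

/-- The weight of a topological space: the minimal cardinality of a basis of the topology. -/
noncomputable def topWeight (X : Type u) [TopologicalSpace X] : Cardinal.{u} :=
  sInf { c : Cardinal.{u} |
    ∃ B : Set (Set X), TopologicalSpace.IsTopologicalBasis B ∧ Cardinal.mk B = c }

/-- `S` is a suitable subset of the topological group `G`. -/
def IsSuitable (G : Type u) [Group G] [TopologicalSpace G] [IsTopologicalGroup G]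
    (S : Set G) : Prop :=
  (1 : G) ∉ S ∧ IsClosed (S ∪ {1}) ∧ DiscreteTopology S ∧
    (Subgroup.closure S).topologicalClosure = ⊤

open TopologicalSpace Cardinal

lemma topWeight_le_mk_basis {X : Type u} [TopologicalSpace X] {B : Set (Set X)}
    (hB : IsTopologicalBasis B) : topWeight X ≤ Cardinal.mk B :=
  csInf_le' ⟨B, hB, rfl⟩

lemma exists_basis_card_eq_topWeight (X : Type u) [TopologicalSpace X] :
    ∃ B : Set (Set X), IsTopologicalBasis B ∧ Cardinal.mk B = topWeight X := by
  have hne : { c : Cardinal.{u} |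
      ∃ B : Set (Set X), IsTopologicalBasis B ∧ Cardinal.mk B = c }.Nonempty :=
    ⟨_, { U : Set X | IsOpen U }, isTopologicalBasis_opens, rfl⟩
  exact csInf_mem hne

/-- Conjugation of permutations along an equivalence, as a monoid hom. -/
def permHomCongr {α β : Type*} (e : α ≃ β) : Equiv.Perm α →* Equiv.Perm β where
  toFun p := e.permCongr p
  map_one' := by ext x; simp
  map_mul' p q := by ext x; simp

lemma permHomCongr_eq_one_iff {α β : Type*} (e : α ≃ β) (p : Equiv.Perm α) :
    permHomCongr e p = 1 ↔ p = 1 := by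
  constructor
  · intro h
    ext a
    have h2 : (permHomCongr e p) (e a) = e a := by rw [h]; rfl
    simpa [permHomCongr, Equiv.permCongr_apply] using h2
  · rintro rfl; exact map_one _

lemma heq_one_perm {n₁ n₂ : ℕ} (hn : n₁ = n₂) :
    HEq (1 : Equiv.Perm (Fin n₁)) (1 : Equiv.Perm (Fin n₂)) := by subst hn; rfl

lemma heq_apply {n₁ n₂ : ℕ} (hn : n₁ = n₂) {A : Type*}
    (r₁ : A → Equiv.Perm (Fin n₁)) (r₂ : A → Equiv.Perm (Fin n₂)) (hr : HEq r₁ r₂) (x : A) :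
    HEq (r₁ x) (r₂ x) := by
  subst hn; exact heq_of_eq (congrFun (eq_of_heq hr) x)

/-- Two finite-permutation representations of a topological group with open kernels that
agree (heterogeneously) on a topological generating set have the same kernel. -/
lemma ker_eq_ker_of_heq_on {G : Type u} [Group G] [TopologicalSpace G] [IsTopologicalGroup G]
    {S : Set G} (hSgen : (Subgroup.closure S).topologicalClosure = ⊤)
    {n₁ n₂ : ℕ} (φ₁ : G →* Equiv.Perm (Fin n₁)) (φ₂ : G →* Equiv.Perm (Fin n₂))
    (h₁ : IsOpen ((φ₁.ker : Subgroup G) : Set G)) (h₂ : IsOpen ((φ₂.ker : Subgroup G) : Set G))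
    (hn : n₁ = n₂) (hr : ∀ x ∈ S, HEq (φ₁ x) (φ₂ x)) : φ₁.ker = φ₂.ker := by
  subst hn
  have hEq : ∀ x ∈ S, φ₁ x = φ₂ x := fun x hx => eq_of_heq (hr x hx)
  have hle : Subgroup.closure S ≤ φ₁.eqLocus φ₂ := (Subgroup.closure_le _).2 hEq
  have hker_le : φ₁.ker ⊓ φ₂.ker ≤ φ₁.eqLocus φ₂ := by
    rintro x ⟨hx1, hx2⟩
    show φ₁ x = φ₂ x
    rw [show φ₁ x = 1 from hx1, show φ₂ x = 1 from hx2]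
  have hopen : IsOpen ((φ₁.eqLocus φ₂ : Subgroup G) : Set G) := by
    refine Subgroup.isOpen_mono hker_le ?_
    rw [Subgroup.coe_inf]
    exact h₁.inter h₂
  have hclosed : IsClosed ((φ₁.eqLocus φ₂ : Subgroup G) : Set G) :=
    Subgroup.isClosed_of_isOpen _ hopen
  have htop : (⊤ : Subgroup G) ≤ φ₁.eqLocus φ₂ := by
    rw [← hSgen]
    exact Subgroup.topologicalClosure_minimal _ hle hclosed
  have hall : ∀ x : G, φ₁ x = φ₂ x := fun x => htop (Subgroup.mem_top x)
  ext x
  simp [MonoidHom.mem_ker, hall x]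

/-- An infinite suitable subset `S` of a profinite group `G` satisfies `|S| = w(G)`;
in particular any two infinite suitable subsets have the same cardinality. -/
theorem card_infinite_suitable_eq_weight (G : Type u) [Group G] [TopologicalSpace G]
    [IsTopologicalGroup G] [CompactSpace G] [T2Space G] [TotallyDisconnectedSpace G]
    (S : Set G) (hS : IsSuitable G S) (hinf : S.Infinite) :
    Cardinal.mk S = topWeight G := by
  obtain ⟨h1S, hScl, hSdisc, hSgen⟩ := hS
  haveI : DiscreteTopology ↥S := hSdisc
  haveI : Infinite ↥S := hinf.to_subtype
  have hκ : ℵ₀ ≤ Cardinal.mk ↥S := aleph0_le_mk ↥S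
  refine le_antisymm ?_ ?_
  · -- |S| ≤ w(G)
    obtain ⟨B, hB, hBcard⟩ := exists_basis_card_eq_topWeight G
    have hpt : ∀ s : ↥S, ∃ U, U ∈ B ∧ (s : G) ∈ U ∧ ∀ t : ↥S, (t : G) ∈ U → t = s := by
      intro s
      have hop : IsOpen ({s} : Set ↥S) := isOpen_discrete _
      obtain ⟨V, hV, hpre⟩ := isOpen_induced_iff.mp hop
      have hsV : (s : G) ∈ V := by
        have : s ∈ (Subtype.val ⁻¹' V : Set ↥S) := by rw [hpre]; rfl
        exact this
      obtain ⟨U, hUB, hsU, hUV⟩ := hB.exists_subset_of_mem_open hsV hV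
      refine ⟨U, hUB, hsU, fun t ht => ?_⟩
      have : t ∈ (Subtype.val ⁻¹' V : Set ↥S) := hUV ht
      rw [hpre] at this
      exact this
    choose U hUB hsU huniq using hpt
    have hinj : Function.Injective (fun s : ↥S => (⟨U s, hUB s⟩ : ↥B)) := by
      intro s t h
      have hUeq : U s = U t := congrArg Subtype.val h
      exact huniq t s (hUeq ▸ hsU s)
    calc Cardinal.mk ↥S ≤ Cardinal.mk ↥B := Cardinal.mk_le_of_injective hinj
      _ = topWeight G := hBcard
  · -- w(G) ≤ |S|
    -- existence of small open normal subgroups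
    have hnhds : ∀ U : Set G, IsOpen U → (1 : G) ∈ U →
        ∃ H : OpenNormalSubgroup G, (H : Set G) ⊆ U := by
      intro U hU h1
      obtain ⟨W, hW, h1W, hWU⟩ := compact_exists_isClopen_in_isOpen hU h1
      obtain ⟨H, hH⟩ :=
        IsTopologicalGroup.exist_openNormalSubgroup_sub_clopen_nhds_of_one hW h1W
      exact ⟨H, hH.trans hWU⟩
    -- the coset basis
    set bf : (Σ H : OpenNormalSubgroup G, G ⧸ H.toSubgroup) → Set G :=
      fun p => QuotientGroup.mk ⁻¹' {p.2} with hbf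
    have hbfopen : ∀ p, IsOpen (bf p) := by
      rintro ⟨H, q⟩
      haveI : DiscreteTopology (G ⧸ H.toSubgroup) :=
        QuotientGroup.discreteTopology H.toOpenSubgroup.isOpen
      exact (isOpen_discrete {q}).preimage QuotientGroup.continuous_mk
    have hbasis : IsTopologicalBasis (Set.range bf) := by
      refine isTopologicalBasis_of_isOpen_of_nhds ?_ ?_
      · rintro _ ⟨p, rfl⟩; exact hbfopen p
      · intro x U hxU hU
        have hW : IsOpen ((x * ·) ⁻¹' U) := hU.preimage (continuous_mul_left x)
        have h1W : (1 : G) ∈ (x * ·) ⁻¹' U := by simpa using hxU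
        obtain ⟨H, hH⟩ := hnhds _ hW h1W
        refine ⟨bf ⟨H, QuotientGroup.mk x⟩, ⟨⟨H, QuotientGroup.mk x⟩, rfl⟩, rfl, ?_⟩
        intro y hy
        have hxy : x⁻¹ * y ∈ H.toSubgroup := by
          have : (QuotientGroup.mk x : G ⧸ H.toSubgroup) = QuotientGroup.mk y :=
            (Set.mem_singleton_iff.mp hy).symm
          exact (QuotientGroup.eq ).mp this
        have : x * (x⁻¹ * y) ∈ U := hH hxy
        simpa [mul_inv_cancel_left] using this
    -- each S \ H is finite
    have hfin : ∀ H : OpenNormalSubgroup G, (S \ (H : Set G)).Finite := by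
      intro H
      have hHopen : IsOpen (H : Set G) := H.toOpenSubgroup.isOpen
      have heq : (S ∪ {1}) ∩ (H : Set G)ᶜ = S \ (H : Set G) := by
        ext y
        simp only [Set.mem_inter_iff, Set.mem_union, Set.mem_singleton_iff, Set.mem_compl_iff,
          Set.mem_diff]
        constructor
        · rintro ⟨hy | rfl, hyH⟩
          · exact ⟨hy, hyH⟩
          · exact absurd (one_mem H.toSubgroup) hyH
        · rintro ⟨hy, hyH⟩; exact ⟨Or.inl hy, hyH⟩
      have hcl : IsClosed (S \ (H : Set G)) := by
        rw [← heq]; exact hScl.inter hHopen.isClosed_compl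
      haveI : DiscreteTopology ↥(S \ (H : Set G)) :=
        DiscreteTopology.of_subset hSdisc Set.diff_subset
      exact hcl.isCompact.finite ⟨inferInstance⟩
    -- the Finset of "exceptional" elements of S
    have hfin' : ∀ H : OpenNormalSubgroup G,
        { x : ↥S | (x : G) ∉ (H : Set G) }.Finite := by
      intro H
      have : Subtype.val ⁻¹' (S \ (H : Set G)) = { x : ↥S | (x : G) ∉ (H : Set G) } := by
        ext x; simp [x.2]
      exact this ▸ (hfin H).preimage Subtype.val_injective.injOn
    set gmap : OpenNormalSubgroup G → Finset ↥S := fun H => (hfin' H).toFinset with hgmap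
    -- finite quotients, permutation representations
    haveI hQfin : ∀ H : OpenNormalSubgroup G, Finite (G ⧸ H.toSubgroup) :=
      fun H => Subgroup.quotient_finite_of_isOpen _ H.toOpenSubgroup.isOpen
    have hchoice : ∀ H : OpenNormalSubgroup G,
        ∃ n : ℕ, Nonempty ((G ⧸ H.toSubgroup) ≃ Fin n) :=
      fun H => Finite.exists_equiv_fin _
    choose nH eH using hchoice
    set φ : ∀ H : OpenNormalSubgroup G, G →* Equiv.Perm (Fin (nH H)) :=
      fun H => (permHomCongr (eH H).some).comp (MulAction.toPermHom G (G ⧸ H.toSubgroup))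
      with hφ
    have hker : ∀ H : OpenNormalSubgroup G, (φ H).ker = H.toSubgroup := by
      intro H
      have h1 : (MulAction.toPermHom G (G ⧸ H.toSubgroup)).ker = H.toSubgroup := by
        rw [← Subgroup.normalCore_eq_ker, Subgroup.normalCore_eq_self]
      ext x
      simp only [hφ, MonoidHom.mem_ker, MonoidHom.comp_apply, permHomCongr_eq_one_iff]
      rw [← MonoidHom.mem_ker, h1]
    -- each fiber of gmap is countable
    have hcount : ∀ F : Finset ↥S, Countable { H : OpenNormalSubgroup G // gmap H = F } := by
      intro F
      have henc : Function.Injective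
          (fun H : { H : OpenNormalSubgroup G // gmap H = F } =>
            (⟨nH H.1, fun x : ↥(F : Finset ↥S) => φ H.1 ((x : ↥S) : G)⟩ :
              Σ n : ℕ, (↥(F : Finset ↥S) → Equiv.Perm (Fin n)))) := by
        rintro ⟨H₁, hF₁⟩ ⟨H₂, hF₂⟩ heq
        obtain ⟨hn, hr⟩ := Sigma.ext_iff.mp heq
        have hmem : ∀ H : OpenNormalSubgroup G, gmap H = F →
            ∀ x : ↥S, x ∉ F → (x : G) ∈ H.toSubgroup := by
          intro H hF x hx
          by_contra hxH
          exact hx (by rw [← hF, hgmap, Set.Finite.mem_toFinset]; exact hxH)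
        have hrS : ∀ x ∈ S, HEq (φ H₁ x) (φ H₂ x) := by
          intro x hx
          by_cases hxF : (⟨x, hx⟩ : ↥S) ∈ F
          · exact heq_apply hn _ _ hr ⟨⟨x, hx⟩, hxF⟩
          · have e₁ : φ H₁ x = 1 := by
              rw [← MonoidHom.mem_ker, hker H₁]; exact hmem H₁ hF₁ ⟨x, hx⟩ hxF
            have e₂ : φ H₂ x = 1 := by
              rw [← MonoidHom.mem_ker, hker H₂]; exact hmem H₂ hF₂ ⟨x, hx⟩ hxF
            rw [e₁, e₂]; exact heq_one_perm hn
        have hkk : (φ H₁).ker = (φ H₂).ker := by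
          refine ker_eq_ker_of_heq_on hSgen (φ H₁) (φ H₂) ?_ ?_ hn hrS
          · rw [hker H₁]; exact H₁.toOpenSubgroup.isOpen
          · rw [hker H₂]; exact H₂.toOpenSubgroup.isOpen
        rw [hker H₁, hker H₂] at hkk
        ext1
        exact SetLike.ext' (congrArg (fun K : Subgroup G => (K : Set G)) hkk)
      exact henc.countable
    -- counting the open normal subgroups
    have hΛ : Cardinal.mk (OpenNormalSubgroup G) ≤ Cardinal.mk ↥S := by
      calc Cardinal.mk (OpenNormalSubgroup G)
          = Cardinal.mk (Σ F : Finset ↥S, { H : OpenNormalSubgroup G // gmap H = F }) :=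
            Cardinal.mk_congr (Equiv.sigmaFiberEquiv gmap).symm
        _ = Cardinal.sum (fun F : Finset ↥S =>
              Cardinal.mk { H : OpenNormalSubgroup G // gmap H = F }) :=
            Cardinal.mk_sigma _
        _ ≤ Cardinal.sum (fun _ : Finset ↥S => ℵ₀) :=
            Cardinal.sum_le_sum _ _ (fun F => haveI := hcount F; Cardinal.mk_le_aleph0)
        _ = Cardinal.mk (Finset ↥S) * ℵ₀ := Cardinal.sum_const' _ _
        _ = Cardinal.mk ↥S * ℵ₀ := by rw [Cardinal.mk_finset_of_infinite]
        _ = Cardinal.mk ↥S := Cardinal.mul_aleph0_eq hκ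
    -- conclude
    calc topWeight G ≤ Cardinal.mk ↥(Set.range bf) := topWeight_le_mk_basis hbasis
      _ ≤ Cardinal.mk (Σ H : OpenNormalSubgroup G, G ⧸ H.toSubgroup) := Cardinal.mk_range_le
      _ = Cardinal.sum (fun H : OpenNormalSubgroup G => Cardinal.mk (G ⧸ H.toSubgroup)) :=
          Cardinal.mk_sigma _
      _ ≤ Cardinal.sum (fun _ : OpenNormalSubgroup G => ℵ₀) :=
          Cardinal.sum_le_sum _ _ (fun H => Cardinal.mk_le_aleph0)
      _ = Cardinal.mk (OpenNormalSubgroup G) * ℵ₀ := Cardinal.sum_const' _ _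
      _ ≤ Cardinal.mk ↥S * ℵ₀ := mul_le_mul_left hΛ _
      _ = Cardinal.mk ↥S := Cardinal.mul_aleph0_eq hκ
end

section
/- Let H be an infinite open subgroup of a Hausdorff topological group G and let X be a nonempty set of cosets of H in G. Then the subgroup K generated by the union of the cosets in X satisfies w(K) = max(w(H), |X|). -/
universe u

open TopologicalSpace Cardinal Set

section Aux

lemma exists_basis_topWeight (T : Type u) [TopologicalSpace T] :
    ∃ B : Set (Set T), IsTopologicalBasis B ∧ #B = topWeight T := by
  have hne : { c : Cardinal.{u} |
      ∃ B : Set (Set T), IsTopologicalBasis B ∧ #B = c }.Nonempty :=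
    ⟨_, { U : Set T | IsOpen U }, isTopologicalBasis_opens, rfl⟩
  obtain ⟨B, hB, hBc⟩ := csInf_mem hne
  exact ⟨B, hB, hBc⟩

lemma topWeight_le_mk {T : Type u} [TopologicalSpace T] {B : Set (Set T)}
    (hB : IsTopologicalBasis B) : topWeight T ≤ #B :=
  csInf_le' ⟨B, hB, rfl⟩

lemma topWeight_subtype_le {T : Type u} [TopologicalSpace T] (A : Set T) :
    topWeight A ≤ topWeight T := by
  obtain ⟨B, hB, hBc⟩ := exists_basis_topWeight T
  calc topWeight A ≤ #((preimage (Subtype.val : A → T)) '' B) :=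
        topWeight_le_mk (hB.isInducing Topology.IsInducing.subtypeVal)
    _ ≤ #B := mk_image_le
    _ = topWeight T := hBc

lemma topWeight_le_of_homeomorph {T : Type u} {S : Type u} [TopologicalSpace T]
    [TopologicalSpace S] (e : S ≃ₜ T) : topWeight S ≤ topWeight T := by
  obtain ⟨B, hB, hBc⟩ := exists_basis_topWeight T
  calc topWeight S ≤ #((preimage (e : S → T)) '' B) :=
        topWeight_le_mk (hB.isInducing e.isInducing)
    _ ≤ #B := mk_image_le
    _ = topWeight T := hBc

lemma topWeight_eq_of_homeomorph {T : Type u} {S : Type u} [TopologicalSpace T]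
    [TopologicalSpace S] (e : S ≃ₜ T) : topWeight S = topWeight T :=
  le_antisymm (topWeight_le_of_homeomorph e) (topWeight_le_of_homeomorph e.symm)

lemma aleph0_le_topWeight (T : Type u) [TopologicalSpace T] [T1Space T] [Infinite T] :
    Cardinal.aleph0 ≤ topWeight T := by
  obtain ⟨B, hB, hBc⟩ := exists_basis_topWeight T
  by_contra hlt
  rw [not_le, ← hBc] at hlt
  have hinj : Function.Injective (fun t : T => {b : ↥B | t ∈ (b : Set T)}) := by
    intro t₁ t₂ h
    by_contra hne
    obtain ⟨U, hU, ht₁, ht₂⟩ := t1Space_iff_exists_open.mp ‹T1Space T› hne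
    obtain ⟨b, hbB, htb, hbU⟩ := hB.exists_subset_of_mem_open ht₁ hU
    have h' : {b : ↥B | t₁ ∈ (b : Set T)} = {b : ↥B | t₂ ∈ (b : Set T)} := h
    have : (⟨b, hbB⟩ : ↥B) ∈ {b : ↥B | t₁ ∈ (b : Set T)} := htb
    rw [h'] at this
    exact ht₂ (hbU this)
  have h1 : #T ≤ #(Set ↥B) := mk_le_of_injective hinj
  rw [mk_set] at h1
  have h2 : (2 : Cardinal.{u}) ^ #↥B < ℵ₀ :=
    power_lt_aleph0 (by exact_mod_cast nat_lt_aleph0 2) hlt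
  exact (Cardinal.aleph0_le_mk T).not_gt (h1.trans_lt h2)

lemma cardinalMk_subgroup_closure_le {G : Type u} [Group G] (s : Set G) :
    #(Subgroup.closure s) ≤ max Cardinal.aleph0 #s := by
  classical
  have key : ∀ x : ↥(Subgroup.closure s),
      ∃ l : List ↥(s ∪ s⁻¹), (l.map Subtype.val).prod = (x : G) := by
    intro x
    have hx : (x : G) ∈ Submonoid.closure (s ∪ s⁻¹) := by
      rw [← Subgroup.closure_toSubmonoid]; exact x.2
    obtain ⟨l, hl, hprod⟩ := Submonoid.exists_list_of_mem_closure hx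
    refine ⟨l.attach.map (fun y => ⟨y.1, hl y.1 y.2⟩), ?_⟩
    simp only [List.map_map]
    simpa using hprod
  choose f hf using key
  have hinj : Function.Injective f := by
    intro x y hxy
    apply Subtype.ext
    rw [← hf x, ← hf y, hxy]
  refine (mk_le_of_injective hinj).trans ((mk_list_le_max _).trans ?_)
  have hs : #↥(s⁻¹) = #↥s := by
    rw [← Set.image_inv_eq_inv]
    exact Cardinal.mk_image_eq inv_injective
  have hcup : #↥(s ∪ s⁻¹) ≤ max Cardinal.aleph0 #s := by
    refine (mk_union_le _ _).trans ?_
    rw [hs]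
    rcases le_or_gt ℵ₀ #↥s with h | h
    · rw [Cardinal.add_eq_self h]
      exact le_max_right _ _
    · exact le_trans (Cardinal.add_lt_aleph0 h h).le (le_max_left _ _)
  exact max_le (le_max_left _ _) hcup

end Aux

/-- Let `H` be an infinite open subgroup of a Hausdorff topological group `G` and `X` a
nonempty set of (left) cosets of `H` in `G`. Then the subgroup `K` generated by the union
of the cosets in `X` (the preimage of `X` under the quotient map `G → G ⧸ H`) satisfies
$w(K) = \max\{w(H), |X|\}$. -/
theorem weight_subgroup_generated_by_cosets (G : Type u) [Group G] [TopologicalSpace G]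
    [IsTopologicalGroup G] [T2Space G]
    (H : Subgroup G) (hopen : IsOpen (H : Set G)) (hinf : Infinite H)
    (X : Set (G ⧸ H)) (hX : X.Nonempty) :
    topWeight (Subgroup.closure ((QuotientGroup.mk : G → G ⧸ H) ⁻¹' X)) =
      max (topWeight H) (Cardinal.mk X) := by
  classical
  set S : Set G := (QuotientGroup.mk : G → G ⧸ H) ⁻¹' X with hSdef
  set K : Subgroup G := Subgroup.closure S with hKdef
  obtain ⟨x₀, hx₀⟩ := hX
  -- out representatives lie in S
  have houtS : ∀ x ∈ X, (Quotient.out x : G) ∈ S := by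
    intro x hx
    show (QuotientGroup.mk (Quotient.out x) : G ⧸ H) ∈ X
    rw [QuotientGroup.out_eq']
    exact hx
  -- H ≤ K
  have hHK : H ≤ K := by
    intro h hh
    have h1 : (Quotient.out x₀ : G) ∈ S := houtS x₀ hx₀
    have h2 : (Quotient.out x₀ * h : G) ∈ S := by
      show (QuotientGroup.mk (Quotient.out x₀ * h) : G ⧸ H) ∈ X
      rw [QuotientGroup.mk_mul_of_mem _ hh, QuotientGroup.out_eq']
      exact hx₀
    have := mul_mem (inv_mem (Subgroup.subset_closure h1)) (Subgroup.subset_closure h2)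
    simpa [inv_mul_cancel_left] using this
  -- cosets are open sets in G
  have hcosetOpen : ∀ y : G ⧸ H, IsOpen {g : G | (QuotientGroup.mk g : G ⧸ H) = y} := by
    intro y
    have heq : {g : G | (QuotientGroup.mk g : G ⧸ H) = y}
        = (fun g => (Quotient.out y)⁻¹ * g) ⁻¹' (H : Set G) := by
      ext g
      simp only [Set.mem_setOf_eq, Set.mem_preimage, SetLike.mem_coe]
      constructor
      · intro hg
        exact QuotientGroup.eq.mp (by rw [QuotientGroup.out_eq', hg])
      · intro hg
        have := QuotientGroup.eq.mpr hg
        rw [QuotientGroup.out_eq'] at this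
        exact this.symm
    rw [heq]
    exact hopen.preimage (continuous_mul_left _)
  -- the projection from K to G ⧸ H
  set φ : ↥K → G ⧸ H := fun k => QuotientGroup.mk (k : G) with hφdef
  have hφfib : ∀ y : G ⧸ H, IsOpen (φ ⁻¹' {y}) := by
    intro y
    have : φ ⁻¹' {y} = (Subtype.val : ↥K → G) ⁻¹' {g : G | (QuotientGroup.mk g : G ⧸ H) = y} :=
      rfl
    rw [this]
    exact (hcosetOpen y).preimage continuous_subtype_val
  -- X is contained in the range of φ
  have hXsubY : X ⊆ Set.range φ := by
    intro x hx
    exact ⟨⟨Quotient.out x, Subgroup.subset_closure (houtS x hx)⟩, QuotientGroup.out_eq' x⟩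
  -- minimal bases
  obtain ⟨BK, hBK, hBKc⟩ := exists_basis_topWeight ↥K
  obtain ⟨BH, hBH, hBHc⟩ := exists_basis_topWeight ↥H
  -- Lower bound 1 : topWeight H ≤ topWeight K
  have hlow1 : topWeight ↥H ≤ topWeight ↥K := by
    let A : Set ↥K := {k : ↥K | (k : G) ∈ H}
    let e : ↥A ≃ₜ ↥H :=
      { toFun := fun a => ⟨((a : ↥K) : G), a.2⟩
        invFun := fun h => ⟨⟨(h : G), hHK h.2⟩, h.2⟩
        left_inv := fun a => Subtype.ext (Subtype.ext rfl)
        right_inv := fun h => Subtype.ext rfl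
        continuous_toFun := by
          exact Continuous.subtype_mk (continuous_subtype_val.comp continuous_subtype_val) _
        continuous_invFun := by
          exact Continuous.subtype_mk (Continuous.subtype_mk continuous_subtype_val _) _ }
    calc topWeight ↥H = topWeight ↥A := (topWeight_eq_of_homeomorph e).symm
      _ ≤ topWeight ↥K := topWeight_subtype_le A
  -- Lower bound 2 : #(range φ) ≤ topWeight K
  have hlow2 : #(Set.range φ) ≤ topWeight ↥K := by
    have hychoice : ∀ y : Set.range φ, ∃ b, b ∈ BK ∧ b.Nonempty ∧ b ⊆ φ ⁻¹' {(y : G ⧸ H)} := by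
      rintro ⟨y, k, rfl⟩
      obtain ⟨b, hbB, hkb, hbsub⟩ := hBK.exists_subset_of_mem_open (show k ∈ φ ⁻¹' {φ k} from rfl) (hφfib (φ k))
      exact ⟨b, hbB, ⟨k, hkb⟩, hbsub⟩
    choose fb hfbB hfbne hfbsub using hychoice
    have hfbinj : Function.Injective (fun y : Set.range φ => (⟨fb y, hfbB y⟩ : ↥BK)) := by
      intro y₁ y₂ h
      obtain ⟨k, hk⟩ := hfbne y₁
      have hfbeq : fb y₁ = fb y₂ := congrArg Subtype.val h
      have h1 : φ k = (y₁ : G ⧸ H) := hfbsub y₁ hk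
      have h2 : φ k = (y₂ : G ⧸ H) := hfbsub y₂ (hfbeq ▸ hk)
      exact Subtype.ext (h1 ▸ h2)
    calc #(Set.range φ) ≤ #↥BK := mk_le_of_injective hfbinj
      _ = topWeight ↥K := hBKc
  -- the dense set D
  have hT1H : T1Space ↥H := inferInstance
  let NB := {b : Set ↥H // b ∈ BH ∧ b.Nonempty}
  let D : Set G := Set.range (fun b : NB => ((b.2.2.some : ↥H) : G))
  have hDcard : #↥D ≤ #↥BH := by
    refine (mk_range_le).trans ?_
    refine mk_le_of_injective (f := fun b : NB => (⟨b.1, b.2.1⟩ : ↥BH)) ?_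
    intro b₁ b₂ h
    have h' : ((⟨b₁.1, b₁.2.1⟩ : ↥BH) : Set ↥H) = ((⟨b₂.1, b₂.2.1⟩ : ↥BH) : Set ↥H) :=
      congrArg Subtype.val h
    exact Subtype.ext h'
  have hdense : ∀ (h : ↥H) (g : G), ∃ d ∈ D, (d * g)⁻¹ * ((h : G) * g) ∈ H := by
    intro h g
    set F : Set ↥H :=
      (fun t : ↥H => (t : G) * g) ⁻¹' {g' : G | (QuotientGroup.mk g' : G ⧸ H) = QuotientGroup.mk ((h : G) * g)} with hFdef
    have hFopen : IsOpen F :=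
      (hcosetOpen _).preimage (continuous_subtype_val.mul continuous_const)
    have hhF : h ∈ F := rfl
    obtain ⟨b, hbBH, hhb, hbF⟩ := hBH.exists_subset_of_mem_open hhF hFopen
    set nb : NB := ⟨b, hbBH, ⟨h, hhb⟩⟩ with hnb
    refine ⟨((nb.2.2.some : ↥H) : G), ⟨nb, rfl⟩, ?_⟩
    have hsome : nb.2.2.some ∈ F := hbF nb.2.2.some_mem
    have : (QuotientGroup.mk (((nb.2.2.some : ↥H) : G) * g) : G ⧸ H)
        = QuotientGroup.mk ((h : G) * g) := hsome
    exact QuotientGroup.eq.mp this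
  -- the subgroup W
  let R : Set G := (fun x : G ⧸ H => Quotient.out x) '' X
  let W : Subgroup G := Subgroup.closure (R ∪ D)
  have hDW : ∀ d ∈ D, d ∈ W := fun d hd =>
    Subgroup.subset_closure (Set.mem_union_right _ hd)
  have hRW : ∀ r ∈ R, r ∈ W := fun r hr =>
    Subgroup.subset_closure (Set.mem_union_left _ hr)
  -- every element of K lies in a coset represented in W
  have hcover : ∀ k ∈ K, ∃ w ∈ W, w⁻¹ * k ∈ H := by
    intro k hk
    rw [hKdef] at hk
    induction hk using Subgroup.closure_induction with
    | mem s hs =>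
      refine ⟨Quotient.out (QuotientGroup.mk s : G ⧸ H), hRW _ ⟨QuotientGroup.mk s, hs, rfl⟩, ?_⟩
      exact QuotientGroup.eq.mp (QuotientGroup.out_eq' _)
    | one => exact ⟨1, one_mem _, by simpa using H.one_mem⟩
    | mul k₁ k₂ hk₁ hk₂ ih₁ ih₂ =>
      obtain ⟨w₁, hw₁, hh₁⟩ := ih₁
      obtain ⟨w₂, hw₂, hh₂⟩ := ih₂
      obtain ⟨d, hd, hm⟩ := hdense ⟨w₁⁻¹ * k₁, hh₁⟩ w₂
      refine ⟨w₁ * d * w₂, mul_mem (mul_mem hw₁ (hDW d hd)) hw₂, ?_⟩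
      have heq : (w₁ * d * w₂)⁻¹ * (k₁ * k₂)
          = ((d * w₂)⁻¹ * ((w₁⁻¹ * k₁) * w₂)) * (w₂⁻¹ * k₂) := by group
      rw [heq]
      exact mul_mem hm hh₂
    | inv k hk ih =>
      obtain ⟨w, hw, hh⟩ := ih
      obtain ⟨d, hd, hm⟩ := hdense ⟨(w⁻¹ * k)⁻¹, inv_mem hh⟩ w⁻¹
      refine ⟨d * w⁻¹, mul_mem (hDW d hd) (inv_mem hw), ?_⟩
      have heq : (d * w⁻¹)⁻¹ * k⁻¹ = (d * w⁻¹)⁻¹ * ((w⁻¹ * k)⁻¹ * w⁻¹) := by group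
      rw [heq]
      exact hm
  -- bound on the range of φ
  have hYW : #(Set.range φ) ≤ max Cardinal.aleph0 (#X + topWeight ↥H) := by
    have hsub : Set.range φ ⊆ (QuotientGroup.mk : G → G ⧸ H) '' (W : Set G) := by
      rintro _ ⟨k, rfl⟩
      obtain ⟨w, hwW, hw⟩ := hcover (k : G) k.2
      exact ⟨w, hwW, (QuotientGroup.eq.mpr hw)⟩
    calc #(Set.range φ) ≤ #((QuotientGroup.mk : G → G ⧸ H) '' (W : Set G)) :=
          mk_le_mk_of_subset hsub
      _ ≤ #↥W := mk_image_le
      _ ≤ max Cardinal.aleph0 #↥(R ∪ D) := cardinalMk_subgroup_closure_le _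
      _ ≤ max Cardinal.aleph0 (#X + topWeight ↥H) := by
          refine max_le_max le_rfl ?_
          refine (mk_union_le _ _).trans ?_
          refine add_le_add ?_ ?_
          · exact (mk_image_le).trans le_rfl
          · exact hDcard.trans_eq hBHc
  -- Upper bound: explicit basis for K
  have hup : topWeight ↥K ≤ #(Set.range φ) * topWeight ↥H := by
    let j : ↥H → ↥K := fun h => ⟨(h : G), hHK h.2⟩
    have hjcont : Continuous j := Continuous.subtype_mk continuous_subtype_val _
    have hjopen : ∀ b ∈ BH, IsOpen (j '' b) := by
      intro b hb
      have hvb : IsOpen ((Subtype.val : ↥H → G) '' b) := by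
        have : IsOpenMap (Subtype.val : ↥H → G) := hopen.isOpenEmbedding_subtypeVal.isOpenMap
        exact this b (hBH.isOpen hb)
      have heq : j '' b = (Subtype.val : ↥K → G) ⁻¹' ((Subtype.val : ↥H → G) '' b) := by
        ext k
        constructor
        · rintro ⟨h, hh, rfl⟩
          exact ⟨h, hh, rfl⟩
        · rintro ⟨h, hh, hk⟩
          exact ⟨h, hh, Subtype.ext hk⟩
      rw [heq]
      exact hvb.preimage continuous_subtype_val
    have hrep : ∀ y : Set.range φ, ∃ k : ↥K, φ k = (y : G ⧸ H) := fun y => y.2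
    choose rep hrepφ using hrep
    let C : Set (Set ↥K) :=
      Set.range (fun p : (Set.range φ) × ↥BH => (fun k => rep p.1 * k) '' (j '' (p.2 : Set ↥H)))
    have hCbasis : IsTopologicalBasis C := by
      apply isTopologicalBasis_of_isOpen_of_nhds
      · rintro _ ⟨p, rfl⟩
        exact (Homeomorph.mulLeft (rep p.1)).isOpenMap _ (hjopen _ p.2.2)
      · intro x U hxU hU
        set y : Set.range φ := ⟨φ x, ⟨x, rfl⟩⟩ with hy
        set k₀ : ↥K := rep y with hk₀
        have hmem : ((k₀⁻¹ * x : ↥K) : G) ∈ H := by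
          have h1 : (QuotientGroup.mk (k₀ : G) : G ⧸ H) = QuotientGroup.mk (x : G) := hrepφ y
          have h2 : ((k₀ : G))⁻¹ * (x : G) ∈ H := QuotientGroup.eq.mp h1
          simpa using h2
        set h₀ : ↥H := ⟨((k₀⁻¹ * x : ↥K) : G), hmem⟩ with hh₀
        have hjh₀ : j h₀ = k₀⁻¹ * x := Subtype.ext rfl
        set V : Set ↥H := j ⁻¹' ((fun k => k₀⁻¹ * k) '' U) with hV
        have hVopen : IsOpen V :=
          ((Homeomorph.mulLeft (k₀⁻¹ : ↥K)).isOpenMap _ hU).preimage hjcont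
        have hh₀V : h₀ ∈ V :=
          Set.mem_preimage.mpr (by rw [hjh₀]; exact ⟨x, hxU, rfl⟩)
        obtain ⟨b, hbBH, hh₀b, hbV⟩ := hBH.exists_subset_of_mem_open hh₀V hVopen
        refine ⟨(fun k => k₀ * k) '' (j '' b), ⟨(y, ⟨b, hbBH⟩), rfl⟩, ?_, ?_⟩
        · exact ⟨j h₀, ⟨h₀, hh₀b, rfl⟩, by rw [hjh₀]; simp⟩
        · rintro _ ⟨_, ⟨h, hhb, rfl⟩, rfl⟩
          obtain ⟨u, huU, hu⟩ := Set.mem_preimage.mp (hbV hhb)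
          show k₀ * j h ∈ U
          have : k₀ * j h = u := by rw [← hu]; simp
          rwa [this]
    calc topWeight ↥K ≤ #↥C := topWeight_le_mk hCbasis
      _ ≤ #((Set.range φ) × ↥BH) := mk_range_le
      _ = #(Set.range φ) * #↥BH := by
          rw [Cardinal.mk_prod, Cardinal.lift_id, Cardinal.lift_id]
      _ = #(Set.range φ) * topWeight ↥H := by rw [hBHc]
  -- final cardinal arithmetic
  have h1 : Cardinal.aleph0 ≤ topWeight ↥H := aleph0_le_topWeight ↥H
  have h4 : #X ≤ #(Set.range φ) := mk_le_mk_of_subset hXsubY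
  refine le_antisymm ?_ (max_le hlow1 (h4.trans hlow2))
  have hy : #(Set.range φ) ≤ max (topWeight ↥H) #X := by
    refine hYW.trans ?_
    have hadd : #X + topWeight ↥H = max (topWeight ↥H) #X := by
      rw [add_comm, Cardinal.add_eq_max h1]
    rw [hadd]
    exact max_le (h1.trans (le_max_left _ _)) le_rfl
  calc topWeight ↥K ≤ #(Set.range φ) * topWeight ↥H := hup
    _ ≤ max (topWeight ↥H) #X * topWeight ↥H := by
        exact mul_le_mul_left hy _
    _ = max (topWeight ↥H) #X := by
        rw [Cardinal.mul_eq_max (h1.trans (le_max_left _ _)) h1]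
        exact max_eq_left (le_max_left _ _)
end
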